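/- Let G be a finitely generated group with finite generating set S, and suppose there exists N ⊆ G such that (i) |N ∩ B_S(n)| / |B_S(n)| → 0 as n → ∞, and (ii) |C_G(g) ∩ B_S(n)| / |B_S(n)| → 0 uniformly over g ∈ G \ N. Then dc_S(G) := limsup_n |{(a,b) ∈ B_S(n)² : ab = ba}| / |B_S(n)|² = 0. -/

import Mathlib

/-- The word length of `g` with respect to the generating set `S`:
the least length of a word in `S ∪ S⁻¹` representing `g`. -/
noncomputable def wordLength {G : Type*} [Group G] (S : Set G) (g : G) : ℕ :=
  sInf {n | ∃ l : List G, (∀ x ∈ l, x ∈ S ∨ x⁻¹ ∈ S) ∧ l.prod = g ∧ l.length = n}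

/-- The ball of radius `n` in the Cayley graph of `G` with respect to `S`. -/
def ball {G : Type*} [Group G] (S : Set G) (n : ℕ) : Set G :=
  {g | wordLength S g ≤ n}

/-- The translation length `τ_S(g) = limsup_n |g^n|_S / n`. -/
noncomputable def translationLength {G : Type*} [Group G] (S : Set G) (g : G) : ℝ :=
  Filter.limsup (fun n : ℕ => (wordLength S (g ^ n) : ℝ) / n) Filter.atTop

open Filter

lemma finite_lists {G : Type*} {T : Set G} (hT : T.Finite) (n : ℕ) :
    {l : List G | (∀ x ∈ l, x ∈ T) ∧ l.length ≤ n}.Finite := by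
  induction n with
  | zero =>
    apply Set.Finite.subset (Set.finite_singleton ([] : List G))
    rintro l ⟨-, hlen⟩
    simpa using List.length_eq_zero_iff.mp (Nat.le_zero.mp hlen)
  | succ n ih =>
    apply Set.Finite.subset
      (((hT.prod ih).image (fun p : G × List G => p.1 :: p.2)).insert ([] : List G))
    rintro l ⟨hmem, hlen⟩
    rcases l with _ | ⟨x, xs⟩
    · exact Set.mem_insert _ _
    · refine Set.mem_insert_of_mem _ ⟨(x, xs), ⟨hmem x (by simp),
        fun y hy => hmem y (List.mem_cons_of_mem _ hy), Nat.le_of_succ_le_succ hlen⟩, rfl⟩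

lemma word_exists {G : Type*} [Group G] {S : Set G} (hgen : Subgroup.closure S = ⊤) (g : G) :
    {m | ∃ l : List G, (∀ x ∈ l, x ∈ S ∨ x⁻¹ ∈ S) ∧ l.prod = g ∧ l.length = m}.Nonempty := by
  have hg : g ∈ Submonoid.closure (S ∪ S⁻¹) := by
    rw [← Subgroup.closure_toSubmonoid, hgen]
    trivial
  obtain ⟨l, hl, hprod⟩ := Submonoid.exists_list_of_mem_closure hg
  refine ⟨l.length, l, fun x hx => ?_, hprod, rfl⟩
  rcases hl x hx with h | h
  · exact Or.inl h
  · exact Or.inr (Set.mem_inv.mp h)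

lemma ball_finite {G : Type*} [Group G] {S : Set G} (hS : S.Finite)
    (hgen : Subgroup.closure S = ⊤) (n : ℕ) : (ball S n).Finite := by
  have hT : (S ∪ S⁻¹).Finite := hS.union hS.inv
  apply Set.Finite.subset ((finite_lists hT n).image List.prod)
  intro g hg
  have hne := word_exists hgen g
  have hmem := Nat.sInf_mem hne
  obtain ⟨l, hl, hprod, hlen⟩ := hmem
  refine ⟨l, ⟨fun x hx => ?_, ?_⟩, hprod⟩
  · rcases hl x hx with h | h
    · exact Or.inl h
    · exact Or.inr (Set.mem_inv.mpr h)
  · rw [hlen]; exact hg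

lemma one_mem_ball {G : Type*} [Group G] (S : Set G) (n : ℕ) : (1 : G) ∈ ball S n := by
  have : wordLength S (1 : G) ≤ 0 :=
    Nat.sInf_le ⟨([] : List G), by simp, by simp, rfl⟩
  exact le_trans this (Nat.zero_le n)

/-- If `N ⊆ G` is negligible and the centralizer densities tend to `0`
uniformly over `g ∈ G \ N`, then the degree of commutativity
`dc_S(G) = limsup_n |{(a,b) ∈ B_S(n)² : ab = ba}| / |B_S(n)|²` is `0`. -/
theorem dc_eq_zero_of_negligible {G : Type*} [Group G]
    (S : Set G) (hS : S.Finite) (hgen : Subgroup.closure S = ⊤) (N : Set G)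
    (h1 : Filter.Tendsto
      (fun n : ℕ => (Nat.card (N ∩ ball S n : Set G) : ℝ) / (Nat.card (ball S n) : ℝ))
      Filter.atTop (nhds 0))
    (h2 : ∀ ε > (0 : ℝ), ∃ n₀ : ℕ, ∀ n ≥ n₀, ∀ g ∉ N,
      (Nat.card ((Subgroup.centralizer {g} : Set G) ∩ ball S n : Set G) : ℝ) /
        (Nat.card (ball S n) : ℝ) < ε) :
    Filter.limsup
      (fun n : ℕ =>
        (Nat.card {p : G × G | p.1 ∈ ball S n ∧ p.2 ∈ ball S n ∧ p.1 * p.2 = p.2 * p.1} : ℝ) /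
          (Nat.card (ball S n) : ℝ) ^ 2)
      Filter.atTop = 0 := by
  classical
  have hfin : ∀ n, (ball S n).Finite := ball_finite hS hgen
  -- Finset version of the ball
  set B : ℕ → Finset G := fun n => (hfin n).toFinset with hB
  have hcard : ∀ n, (Nat.card (ball S n) : ℕ) = (B n).card := by
    intro n
    rw [Nat.card_coe_set_eq, Set.ncard_eq_toFinset_card _ (hfin n)]
  have hBpos : ∀ n, 0 < (B n).card := by
    intro n
    refine Finset.card_pos.mpr ⟨1, ?_⟩
    simp only [hB, Set.Finite.mem_toFinset]
    exact one_mem_ball S n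
  have hpos : ∀ n, (0 : ℝ) < ((B n).card : ℝ) := fun n => by exact_mod_cast hBpos n
  -- it suffices to show the sequence tends to 0
  suffices h : Tendsto
      (fun n : ℕ =>
        (Nat.card {p : G × G | p.1 ∈ ball S n ∧ p.2 ∈ ball S n ∧ p.1 * p.2 = p.2 * p.1} : ℝ) /
          (Nat.card (ball S n) : ℝ) ^ 2) atTop (nhds 0) by
    exact h.limsup_eq
  rw [Metric.tendsto_atTop]
  intro ε hε
  obtain ⟨n₀, hn₀⟩ := h2 (ε / 2) (by positivity)
  have h1' := Metric.tendsto_atTop.mp h1 (ε / 2) (by positivity)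
  obtain ⟨n₁, hn₁⟩ := h1'
  refine ⟨max n₀ n₁, fun n hn => ?_⟩
  have hn0 : n ≥ n₀ := le_trans (le_max_left _ _) hn
  have hn1 : n ≥ n₁ := le_trans (le_max_right _ _) hn
  -- the finset of commuting pairs
  set P : Finset (G × G) := (B n ×ˢ B n).filter (fun p => p.1 * p.2 = p.2 * p.1) with hP
  have hPcard : (Nat.card {p : G × G |
      p.1 ∈ ball S n ∧ p.2 ∈ ball S n ∧ p.1 * p.2 = p.2 * p.1} : ℕ) = P.card := by
    have hset : {p : G × G | p.1 ∈ ball S n ∧ p.2 ∈ ball S n ∧ p.1 * p.2 = p.2 * p.1}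
        = (P : Set (G × G)) := by
      ext p
      simp [hP, hB, Set.Finite.mem_toFinset, and_assoc]
    rw [hset, Nat.card_coe_set_eq, Set.ncard_coe_finset]
  -- the intersection N ∩ ball as a finset
  have hNfin : (N ∩ ball S n).Finite := Set.Finite.inter_of_right (hfin n) N
  have hNcard : (Nat.card (N ∩ ball S n : Set G) : ℕ) = hNfin.toFinset.card := by
    rw [Nat.card_coe_set_eq, Set.ncard_eq_toFinset_card _ hNfin]
  -- split P according to whether the first coordinate is in N
  have hsplit : P.card = (P.filter (fun p => p.1 ∈ N)).card
      + (P.filter (fun p => p.1 ∉ N)).card :=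
    (Finset.card_filter_add_card_filter_not _).symm
  -- bound the first part
  have hbound1 : (P.filter (fun p => p.1 ∈ N)).card ≤ hNfin.toFinset.card * (B n).card := by
    rw [← Finset.card_product]
    apply Finset.card_le_card
    intro p hp
    simp only [Finset.mem_filter, hP, hB, Finset.mem_product, Set.Finite.mem_toFinset,
      Set.mem_inter_iff] at hp ⊢
    exact ⟨⟨hp.2, hp.1.1.1⟩, hp.1.1.2⟩
  -- bound the second part
  have hbound2 : ((P.filter (fun p => p.1 ∉ N)).card : ℝ)
      ≤ ((B n).card : ℝ) * (ε / 2 * ((B n).card : ℝ)) := by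
    have hfib : (P.filter (fun p => p.1 ∉ N)).card
        = ∑ a ∈ B n, ((P.filter (fun p => p.1 ∉ N)).filter (fun p => p.1 = a)).card := by
      apply Finset.card_eq_sum_card_fiberwise
      intro p hp
      simp only [Finset.mem_coe, Finset.mem_filter, hP, Finset.mem_product] at hp
      exact hp.1.1.1
    rw [hfib]
    push_cast
    have hterm : ∀ a ∈ B n,
        (((P.filter (fun p => p.1 ∉ N)).filter (fun p => p.1 = a)).card : ℝ)
          ≤ ε / 2 * ((B n).card : ℝ) := by
      intro a _
      by_cases haN : a ∈ N
      · have : (P.filter (fun p => p.1 ∉ N)).filter (fun p => p.1 = a) = ∅ := by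
          apply Finset.filter_false_of_mem
          intro p hp
          simp only [Finset.mem_filter] at hp
          intro hpa
          exact hp.2 (hpa ▸ haN)
        rw [this]
        simp only [Finset.card_empty, Nat.cast_zero]
        positivity
      · have hCfin : ((Subgroup.centralizer {a} : Set G) ∩ ball S n).Finite :=
          Set.Finite.inter_of_right (hfin n) _
        have hClt := hn₀ n hn0 a haN
        rw [div_lt_iff₀ (by rw [hcard]; exact hpos n)] at hClt
        have hCcard : (Nat.card ((Subgroup.centralizer {a} : Set G) ∩ ball S n : Set G) : ℕ)
            = hCfin.toFinset.card := by
          rw [Nat.card_coe_set_eq, Set.ncard_eq_toFinset_card _ hCfin]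
        rw [hCcard, hcard] at hClt
        refine le_trans ?_ hClt.le
        have hsub : (((P.filter (fun p => p.1 ∉ N)).filter (fun p => p.1 = a)).card : ℕ)
            ≤ hCfin.toFinset.card := by
          apply Finset.card_le_card_of_injOn Prod.snd
          · intro p hp
            simp only [Finset.mem_coe, Finset.mem_filter, hP, hB, Finset.mem_product,
              Set.Finite.mem_toFinset, Set.mem_inter_iff] at hp ⊢
            obtain ⟨⟨⟨⟨-, hp2⟩, hcomm⟩, -⟩, hpa⟩ := hp
            refine ⟨?_, hp2⟩
            rw [SetLike.mem_coe, Subgroup.mem_centralizer_iff]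
            intro h hh
            rw [Set.mem_singleton_iff] at hh
            subst hh
            rw [← hpa]
            exact hcomm
          · intro p hp q hq hpq
            have hp' : p.1 = a := (Finset.mem_filter.mp (Finset.mem_coe.mp hp)).2
            have hq' : q.1 = a := (Finset.mem_filter.mp (Finset.mem_coe.mp hq)).2
            exact Prod.ext (hp'.trans hq'.symm) hpq
        exact_mod_cast hsub
    calc (∑ a ∈ B n,
          (((P.filter (fun p => p.1 ∉ N)).filter (fun p => p.1 = a)).card : ℝ))
        ≤ ∑ _a ∈ B n, ε / 2 * ((B n).card : ℝ) := Finset.sum_le_sum hterm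
      _ = ((B n).card : ℝ) * (ε / 2 * ((B n).card : ℝ)) := by
          rw [Finset.sum_const, nsmul_eq_mul]
  -- conclude
  have hNlt : (hNfin.toFinset.card : ℝ) / ((B n).card : ℝ) < ε / 2 := by
    have := hn₁ n hn1
    rw [Real.dist_eq, sub_zero, abs_of_nonneg (by positivity)] at this
    rwa [hNcard, hcard] at this
  rw [Real.dist_eq, sub_zero, abs_of_nonneg (by positivity), hPcard, hcard]
  have hPle : (P.card : ℝ) ≤ (hNfin.toFinset.card : ℝ) * ((B n).card : ℝ)
      + ((B n).card : ℝ) * (ε / 2 * ((B n).card : ℝ)) := by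
    rw [hsplit]
    push_cast
    exact add_le_add (by exact_mod_cast hbound1) hbound2
  have hc0 : ((B n).card : ℝ) ≠ 0 := (hpos n).ne'
  calc (P.card : ℝ) / ((B n).card : ℝ) ^ 2
      ≤ ((hNfin.toFinset.card : ℝ) * ((B n).card : ℝ)
          + ((B n).card : ℝ) * (ε / 2 * ((B n).card : ℝ))) / ((B n).card : ℝ) ^ 2 := by
        gcongr
    _ = (hNfin.toFinset.card : ℝ) / ((B n).card : ℝ) + ε / 2 := by
        field_simp
    _ < ε / 2 + ε / 2 := by linarith
    _ = ε := by ring
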